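/- Let T=(V_T,E_T) be a locally finite tree in which every vertex has degree at least two, and let A ⊆ V_T be a finite set of vertices. Then there exists a collection of Σ_{v∈A} (deg(v) − 2) pairwise edge-disjoint infinite simple paths in T, each starting at a vertex of A. -/

import Mathlib

open MeasureTheory Filter Set
open scoped ENNReal

namespace Percolation

variable {V : Type*}

/-- The graph spanned by the open edges of a configuration `ω : Sym2 V → Bool`. -/
def openGraph (G : SimpleGraph V) (ω : Sym2 V → Bool) : SimpleGraph V where
  Adj u w := G.Adj u w ∧ ω s(u, w) = true
  symm := by
    refine ⟨fun u w h => ?_⟩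
    exact ⟨h.1.symm, by rw [Sym2.eq_swap]; exact h.2⟩
  loopless := ⟨fun u h => G.loopless.irrefl u h.1⟩

/-- The open cluster of the vertex `v` in the configuration `ω`. -/
def cluster (G : SimpleGraph V) (ω : Sym2 V → Bool) (v : V) : Set V :=
  {u | (openGraph G ω).Reachable v u}

/-- The set `E(S)` of edges of `G` with at least one endpoint in `S`. -/
def touchingEdges (G : SimpleGraph V) (S : Set V) : Set (Sym2 V) :=
  {e | e ∈ G.edgeSet ∧ ∃ u ∈ S, u ∈ e}

/-- The set `E(K_v)` of edges of `G` with at least one endpoint in the cluster of `v`. -/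
def clusterEdges (G : SimpleGraph V) (ω : Sym2 V → Bool) (v : V) : Set (Sym2 V) :=
  touchingEdges G (cluster G ω v)

/-- `μ` is the law of Bernoulli-`p` bond percolation on `G`: it is a probability measure on
configurations under which the states of the edges of `G` are independent, each edge being
open with probability `p`.  (This characterizes `μ` on all events depending only on the states
of the edges of `G`.) -/
def IsBernoulli (G : SimpleGraph V) (p : ℝ) (μ : Measure (Sym2 V → Bool)) : Prop :=
  IsProbabilityMeasure μ ∧
    ∀ s : Finset (Sym2 V), ↑s ⊆ G.edgeSet → ∀ f : Sym2 V → Bool,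
      μ {ω | ∀ e ∈ s, ω e = f e} =
        ENNReal.ofReal (p ^ (s.filter fun e => f e = true).card *
          (1 - p) ^ (s.filter fun e => f e = false).card)

/-- The critical probability of `G`. -/
noncomputable def pc (G : SimpleGraph V) : ℝ :=
  sInf {p : ℝ | 0 ≤ p ∧ p ≤ 1 ∧
    ∀ μ : Measure (Sym2 V → Bool), IsBernoulli G p μ →
      μ {ω | ∃ u : V, (cluster G ω u).Infinite} = 1}

/-- `ζ(p) = -limsup (1/n) log P_p(n ≤ E_v < ∞)`, where `μ` is Bernoulli-`p` percolation. -/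
noncomputable def zeta (G : SimpleGraph V) (v : V) (μ : Measure (Sym2 V → Bool)) : ℝ :=
  - Filter.limsup (fun n : ℕ =>
      Real.log (μ {ω | (n : ℕ∞) ≤ (clusterEdges G ω v).encard ∧
        (clusterEdges G ω v).encard < ⊤}).toReal / (n : ℝ)) Filter.atTop

/-- A graph is (vertex-)transitive if its automorphism group acts transitively. -/
def IsTransitive (G : SimpleGraph V) : Prop :=
  ∀ u w : V, ∃ φ : G ≃g G, φ u = w

/-- A graph is quasi-transitive if its automorphism group has finitely many vertex orbits. -/
def IsQuasiTransitive (G : SimpleGraph V) : Prop :=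
  ∃ S : Finset V, ∀ u : V, ∃ φ : G ≃g G, φ u ∈ S

/-- The volume `∑_{u ∈ K} deg(u)` of a set of vertices. -/
noncomputable def vol (G : SimpleGraph V) (K : Set V) : ℝ :=
  ∑ᶠ u ∈ K, ((G.neighborSet u).ncard : ℝ)

/-- The edge boundary `∂_E K`: edges with exactly one endpoint in `K`. -/
def edgeBoundary (G : SimpleGraph V) (K : Set V) : Set (Sym2 V) :=
  {e | e ∈ G.edgeSet ∧ ∃ u w : V, e = s(u, w) ∧ u ∈ K ∧ w ∉ K}

/-- The Cheeger constant `Φ_E(G)`. -/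
noncomputable def cheeger (G : SimpleGraph V) : ℝ :=
  sInf {r : ℝ | ∃ K : Set V, K.Finite ∧ K.Nonempty ∧
    r = ((edgeBoundary G K).ncard : ℝ) / vol G K}

/-- A graph is nonamenable if its Cheeger constant is positive. -/
def Nonamenable (G : SimpleGraph V) : Prop := 0 < cheeger G

/-- The anchored Cheeger constant `Φ*_E` of (the component of `v` in) `H`, anchored at `v`. -/
noncomputable def anchoredCheeger (H : SimpleGraph V) (v : V) : ℝ :=
  ⨆ n : ℕ, sInf {r : ℝ | ∃ K : Set V, v ∈ K ∧ K.Finite ∧ n ≤ K.ncard ∧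
    (SimpleGraph.induce K H).Connected ∧
    r = ((edgeBoundary H K).ncard : ℝ) / vol H K}

/-- The cluster of `v`, viewed as a subgraph of `G`. -/
def clusterSubgraph (G : SimpleGraph V) (ω : Sym2 V → Bool) (v : V) : G.Subgraph where
  verts := cluster G ω v
  Adj u w := (openGraph G ω).Adj u w ∧ u ∈ cluster G ω v ∧ w ∈ cluster G ω v
  adj_sub h := And.left h.1
  edge_vert h := h.2.1
  symm := ⟨fun u w h => ⟨h.1.symm, h.2.2, h.2.1⟩⟩

/-- Membership in `𝓗_v`: finite connected subgraphs of `G` containing `v`. -/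
def HSetMem (G : SimpleGraph V) (v : V) (H : G.Subgraph) : Prop :=
  v ∈ H.verts ∧ H.verts.Finite ∧ H.Connected

/-- `F : 𝓗_v → ℂ` has subexponential growth:
`limsup (1/n) log sup {|F(H)| : H ∈ 𝓗_v, |E(H)| ≤ n} ≤ 0`. -/
def SubexpGrowth (G : SimpleGraph V) (v : V) (F : G.Subgraph → ℂ) : Prop :=
  Filter.limsup (fun n : ℕ =>
    Real.log (sSup {r : ℝ | ∃ H : G.Subgraph, HSetMem G v H ∧
      (touchingEdges G H.verts).ncard ≤ n ∧ r = ‖F H‖}) / (n : ℝ))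
    Filter.atTop ≤ 0

-- The configuration `ω` with the edge `e` opened, i.e. `ω^e`.
open Classical in
noncomputable def updOpen (ω : Sym2 V → Bool) (e : Sym2 V) : Sym2 V → Bool :=
  fun e' => if e' = e then true else ω e'

/-- The fluctuation `h_p(K_v) = p|∂K_v| - (1-p)|E_o(K_v)|` of the cluster of `v`. -/
noncomputable def fluct (G : SimpleGraph V) (p : ℝ) (ω : Sym2 V → Bool) (v : V) : ℝ :=
  p * ({e | e ∈ clusterEdges G ω v ∧ ω e = false}.ncard : ℝ) -
    (1 - p) * ({e | e ∈ clusterEdges G ω v ∧ ω e = true}.ncard : ℝ)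

/-- `Piv(H,v,W)`: edges of `H` whose deletion disconnects `v` from some vertex of `W`. -/
def Piv (H : SimpleGraph V) (v : V) (W : Set V) : Set (Sym2 V) :=
  {e | e ∈ H.edgeSet ∧ ∃ w ∈ W, ¬ (H.deleteEdges {e}).Reachable v w}

/-- `Br_k(K_v, v) = max {|Piv(K_v,v,W)| : W ⊆ K_v, |W| ≤ k}`. -/
noncomputable def Br (G : SimpleGraph V) (ω : Sym2 V → Bool) (v : V) (k : ℕ) : ℕ :=
  sSup {m : ℕ | ∃ W : Finset V, ↑W ⊆ cluster G ω v ∧ W.card ≤ k ∧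
    m = (Piv (openGraph G ω) v ↑W).ncard}

/-- `𝒫_ω(S → ∞)`: the minimal number of edges whose removal disconnects `S` from infinity
in the open subgraph of `ω`. -/
noncomputable def minCut (G : SimpleGraph V) (ω : Sym2 V → Bool) (S : Set V) : ℕ∞ :=
  ⨅ C ∈ {C : Set (Sym2 V) |
    ∀ s ∈ S, {u | ((openGraph G ω).deleteEdges C).Reachable s u}.Finite}, C.encard

/-- `v` is a furcation of `ω`: closing all edges incident to `v` splits the cluster of `v`
into at least three distinct infinite connected components. -/
def IsFurcation (G : SimpleGraph V) (ω : Sym2 V → Bool) (v : V) : Prop :=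
  ∃ u1 u2 u3 : V,
    (openGraph G ω).Adj v u1 ∧ (openGraph G ω).Adj v u2 ∧ (openGraph G ω).Adj v u3 ∧
    ¬ ((openGraph G ω).deleteEdges {e | v ∈ e}).Reachable u1 u2 ∧
    ¬ ((openGraph G ω).deleteEdges {e | v ∈ e}).Reachable u1 u3 ∧
    ¬ ((openGraph G ω).deleteEdges {e | v ∈ e}).Reachable u2 u3 ∧
    {x | ((openGraph G ω).deleteEdges {e | v ∈ e}).Reachable u1 x}.Infinite ∧
    {x | ((openGraph G ω).deleteEdges {e | v ∈ e}).Reachable u2 x}.Infinite ∧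
    {x | ((openGraph G ω).deleteEdges {e | v ∈ e}).Reachable u3 x}.Infinite

-- The `n`-step transition probability of simple random walk on the graph `H`.
open Classical in
noncomputable def walkProb (H : SimpleGraph V) : ℕ → V → V → ℝ
  | 0, u, w => if u = w then 1 else 0
  | n + 1, u, w => ∑ᶠ x ∈ H.neighborSet u, walkProb H n x w / ((H.neighborSet u).ncard : ℝ)

/-- Two vertices are `2`-connected in `H` if they are joined by two edge-disjoint paths. -/
def TwoConn (H : SimpleGraph V) (u w : V) : Prop :=
  ∃ p1 p2 : H.Walk u w, p1.IsPath ∧ p2.IsPath ∧ ∀ e ∈ p1.edges, e ∉ p2.edges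

/-- An edge of `H` is a bridge if deleting it disconnects its endpoints. -/
def IsBridgeOf (H : SimpleGraph V) (e : Sym2 V) : Prop :=
  e ∈ H.edgeSet ∧ ∃ u w : V, e = s(u, w) ∧ ¬ (H.deleteEdges {e}).Reachable u w

/-- `w` represents a leaf of the tree `Tr(K_v)` of `2`-connected components of the cluster of
`v`: it lies in the cluster, its `2`-connected component differs from that of `v`, and exactly
one bridge is incident to its `2`-connected component. -/
def IsTrLeaf (G : SimpleGraph V) (ω : Sym2 V → Bool) (v w : V) : Prop :=
  w ∈ cluster G ω v ∧ ¬ TwoConn (openGraph G ω) v w ∧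
    {e : Sym2 V | IsBridgeOf (openGraph G ω) e ∧
      ∃ x ∈ e, TwoConn (openGraph G ω) x w}.encard = 1

/-- `Lf_k(K_v, v)`: the maximum number of edges in a subgraph of `Tr(K_v)` spanned by the
union of the geodesics between the `2`-connected component of `v` and exactly `k` leaves
(`0` if `Tr(K_v)` has fewer than `k` leaves).  The tree edges of such a spanned subgraph are
exactly the bridges separating `v` from one of the chosen leaf representatives. -/
noncomputable def Lf (G : SimpleGraph V) (ω : Sym2 V → Bool) (v : V) (k : ℕ) : ℕ :=
  sSup {m : ℕ | ∃ w : Fin k → V, (∀ i, IsTrLeaf G ω v (w i)) ∧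
    (∀ i j : Fin k, i ≠ j → ¬ TwoConn (openGraph G ω) (w i) (w j)) ∧
    m = (⋃ i, Piv (openGraph G ω) v {w i}).ncard}

/-- `Q_k(p,n,m)`: the supremum over all countable locally finite graphs `G` and vertices `v`
of `P_p(Lf_k(K_v,v) = m and E_v = n)`. -/
noncomputable def Qk (k : ℕ) (p : ℝ) (n m : ℕ) : ℝ :=
  sSup {r : ℝ | ∃ (W : Type) (_ : Countable W) (G : SimpleGraph W) (v : W),
    (∀ u : W, (G.neighborSet u).Finite) ∧
    ∃ μ : Measure (Sym2 W → Bool), IsBernoulli G p μ ∧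
      r = (μ {ω | Lf G ω v k = m ∧ (clusterEdges G ω v).encard = (n : ℕ∞)}).toReal}

/-- `α(p) = sup {α ∈ [0,p] : α^{-α} (1-α)^{-(1-α)} (p/(1-p))^α < e^{ζ(p)}}`. -/
noncomputable def alphaP (G : SimpleGraph V) (v : V) (p : ℝ)
    (μ : Measure (Sym2 V → Bool)) : ℝ :=
  sSup {α : ℝ | 0 ≤ α ∧ α ≤ p ∧
    α ^ (-α) * (1 - α) ^ (-(1 - α)) * (p / (1 - p)) ^ α < Real.exp (zeta G v μ)}

section TreeAux

open SimpleGraph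

variable {T : SimpleGraph V}

/-- Prepend a vertex to an infinite path. -/
private def pre (v : V) (q : ℕ → V) : ℕ → V
  | 0 => v
  | n + 1 => q n

private lemma lift_ne {α : Type*} {Pp Qq : α → Prop} {nn : α → ℕ}
    {w w' : {x // Pp x}} (h : Qq ↑w) (h' : Qq ↑w')
    {k : Fin (nn ↑w)} {k' : Fin (nn ↑w')}
    (hne : (⟨w, k⟩ : (x : {x // Pp x}) × Fin (nn ↑x)) ≠ ⟨w', k'⟩) :
    (⟨⟨↑w, h⟩, k⟩ : (x : {x // Qq x}) × Fin (nn ↑x)) ≠ ⟨⟨↑w', h'⟩, k'⟩ := by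
  intro he
  apply hne
  have h1 : (↑w : α) = ↑w' := congrArg (fun z => ((z.1 : {x // Qq x}) : α)) he
  have hww : w = w' := Subtype.ext h1
  subst hww
  have h2 : k = k' := eq_of_heq (Sigma.ext_iff.mp he).2
  rw [h2]

private lemma dist_le_of_mem_support {u w x : V} {q : T.Walk u w}
    (hx : x ∈ q.support) (hxu : x ≠ u) : T.dist x w + 1 ≤ q.length := by
  obtain ⟨r1, r2, rfl⟩ := SimpleGraph.Walk.mem_support_iff_exists_append.mp hx
  have h1 : T.dist x w ≤ r2.length := SimpleGraph.dist_le r2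
  have h2 : r1.length ≠ 0 := fun h0 => hxu (SimpleGraph.Walk.eq_of_length_eq_zero h0).symm
  rw [SimpleGraph.Walk.length_append]
  omega

private lemma away (hT : T.IsTree) {v u u' w : V} (hu : T.Adj v u) (hu' : T.Adj v u')
    (hne : u ≠ u') (h : T.dist w u + 1 = T.dist w v) : T.dist w u' = T.dist w v + 1 := by
  have hc := hT.isConnected
  have hvu' : T.dist v u' = 1 := SimpleGraph.dist_eq_one_iff_adj.mpr hu'
  have hle : T.dist w u' ≤ T.dist w v + 1 := by
    have ht := hc.dist_triangle (u := w) (v := v) (w := u')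
    omega
  have hge : T.dist w v ≤ T.dist w u' + 1 := by
    have ht := hc.dist_triangle (u := w) (v := u') (w := v)
    have : T.dist u' v = 1 := SimpleGraph.dist_eq_one_iff_adj.mpr hu'.symm
    omega
  by_contra hcon
  have hle2 : T.dist w u' ≤ T.dist w v := by omega
  obtain ⟨q1, hq1l⟩ := hc.exists_walk_length_eq_dist u w
  obtain ⟨q2, hq2l⟩ := hc.exists_walk_length_eq_dist u' w
  have hcuw : T.dist u w = T.dist w u := SimpleGraph.dist_comm
  have hcu'w : T.dist u' w = T.dist w u' := SimpleGraph.dist_comm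
  have hcvw : T.dist v w = T.dist w v := SimpleGraph.dist_comm
  have hv1 : v ∉ q1.support := by
    intro hmem
    have := dist_le_of_mem_support hmem hu.ne
    rw [hq1l] at this
    omega
  have hv2 : v ∉ q2.support := by
    intro hmem
    have := dist_le_of_mem_support hmem hu'.ne
    rw [hq2l] at this
    omega
  have hp1 : (SimpleGraph.Walk.cons hu q1).IsPath :=
    (SimpleGraph.Walk.cons_isPath_iff _ _).mpr
      ⟨q1.isPath_of_length_eq_dist hq1l, hv1⟩
  have hp2 : (SimpleGraph.Walk.cons hu' q2).IsPath :=
    (SimpleGraph.Walk.cons_isPath_iff _ _).mpr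
      ⟨q2.isPath_of_length_eq_dist hq2l, hv2⟩
  have huniq := hT.IsAcyclic.path_unique ⟨_, hp1⟩ ⟨_, hp2⟩
  have heq : SimpleGraph.Walk.cons hu q1 = SimpleGraph.Walk.cons hu' q2 :=
    congrArg Subtype.val huniq
  injection heq with h1 h2 h3 h4
  exact hne h2

private lemma toward (hc : T.Connected) {w v : V} (h : T.dist w v ≠ 0) :
    ∃ u : V, T.Adj v u ∧ T.dist w u + 1 = T.dist w v := by
  have h' : T.dist v w ≠ 0 := by rwa [SimpleGraph.dist_comm]
  obtain ⟨q, hql⟩ := hc.exists_walk_length_eq_dist v w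
  cases q with
  | nil => simp at hql; simp at h
  | cons hadj q' =>
    rename_i u
    refine ⟨u, hadj, ?_⟩
    have h1 : T.dist u w ≤ q'.length := SimpleGraph.dist_le q'
    have h2 : T.dist w v ≤ T.dist w u + T.dist u v := hc.dist_triangle (u := w) (v := u) (w := v)
    have h3 : T.dist u v = 1 := SimpleGraph.dist_eq_one_iff_adj.mpr hadj.symm
    have h4 : T.dist u w = T.dist w u := SimpleGraph.dist_comm
    have h5 : T.dist v w = T.dist w v := SimpleGraph.dist_comm
    rw [SimpleGraph.Walk.length_cons] at hql
    omega

private lemma adjSplit (hT : T.IsTree) {a b : V} (hab : T.Adj a b) (w : V) :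
    T.dist w b = T.dist w a + 1 ∨ T.dist w a = T.dist w b + 1 := by
  have hc := hT.isConnected
  by_cases h0 : T.dist w a = 0
  · left
    have hwa : w = a := hc.dist_eq_zero_iff.mp h0
    subst hwa
    rw [h0, SimpleGraph.dist_eq_one_iff_adj.mpr hab]
  by_cases h0' : T.dist w b = 0
  · right
    have hwb : w = b := hc.dist_eq_zero_iff.mp h0'
    subst hwb
    rw [h0', SimpleGraph.dist_eq_one_iff_adj.mpr hab.symm]
  obtain ⟨u, hu, hud⟩ := toward hc h0
  by_cases hub : u = b
  · subst hub; right; omega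
  · left
    exact away hT hu hab hub hud

private lemma key1 (hT : T.IsTree) {v p u w : V} (hvp : T.Adj v p) (hvu : T.Adj v u)
    (hne : u ≠ p) (h : T.dist w u < T.dist w v) : T.dist w v < T.dist w p := by
  rcases adjSplit hT hvu w with h1 | h1
  · omega
  · have harg : T.dist w u + 1 = T.dist w v := by omega
    have h2 : T.dist w p = T.dist w v + 1 := away hT hvu hvp hne harg
    omega

private lemma geo_inj {f : ℕ → V}
    (hgeo : ∀ m n, m ≤ n → T.dist (f m) (f n) = n - m) : Function.Injective f := by
  intro m n h
  by_contra hne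
  rcases le_total m n with hle | hle
  · have := hgeo m n hle
    rw [h, SimpleGraph.dist_self] at this
    omega
  · have := hgeo n m hle
    rw [h, SimpleGraph.dist_self] at this
    omega

private lemma exists_ray (hT : T.IsTree) (hdeg : ∀ u : V, 2 ≤ (T.neighborSet u).ncard)
    {x y : V} (hxy : T.Adj x y) :
    ∃ f : ℕ → V, f 0 = x ∧ f 1 = y ∧ (∀ n, T.Adj (f n) (f (n + 1))) ∧
      ∀ m n, m ≤ n → T.dist (f m) (f n) = n - m := by
  classical
  have hstep : ∀ a b : V, ∃ c : V, T.Adj a b → T.Adj b c ∧ c ≠ a := by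
    intro a b
    obtain ⟨c, hc1, hc2⟩ := Set.exists_ne_of_one_lt_ncard (s := T.neighborSet b) (by have := hdeg b; omega) a
    exact ⟨c, fun _ => ⟨hc1, hc2⟩⟩
  choose g hg using hstep
  set F : ℕ → V × V := fun n => Nat.rec (x, y) (fun _ pr => (pr.2, g pr.1 pr.2)) n with hF
  have hFs : ∀ n, F (n + 1) = ((F n).2, g (F n).1 (F n).2) := fun n => rfl
  have hadjF : ∀ n, T.Adj (F n).1 (F n).2 := by
    intro n
    induction n with
    | zero => exact hxy
    | succ n ih => rw [hFs n]; exact (hg _ _ ih).1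
  set f : ℕ → V := fun n => (F n).1 with hf
  have hadj : ∀ n, T.Adj (f n) (f (n + 1)) := fun n => hadjF n
  have hnb : ∀ n, f (n + 2) ≠ f n := by
    intro n
    show (F (n + 2)).1 ≠ (F n).1
    exact (hg _ _ (hadjF n)).2
  have geo : ∀ n m, m ≤ n → T.dist (f m) (f n) = n - m := by
    intro n
    induction n using Nat.strong_induction_on with
    | _ n ih =>
      intro m hm
      rcases Nat.eq_or_lt_of_le hm with rfl | hlt
      · simp [SimpleGraph.dist_self]
      cases n with
      | zero => omega
      | succ n' =>
        have hm' : m ≤ n' := by omega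
        rcases Nat.eq_or_lt_of_le hm' with heq | hlt'
        · subst heq
          rw [show m + 1 - m = 1 by omega]
          exact SimpleGraph.dist_eq_one_iff_adj.mpr (hadj m)
        cases n' with
        | zero => omega
        | succ kk =>
          have h1 := ih (kk + 1) (by omega) m (by omega)
          have h0 := ih kk (by omega) m (by omega)
          have h2 : T.dist (f m) (f (kk + 1 + 1)) = T.dist (f m) (f (kk + 1)) + 1 :=
            away hT ((hadj kk).symm) (hadj (kk + 1))
              (fun hh => (hnb kk) hh.symm)
              (show T.dist (f m) (f kk) + 1 = T.dist (f m) (f (kk + 1)) by omega)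
          omega
  exact ⟨f, rfl, rfl, hadj, fun m n h => geo n m h⟩

private lemma buildQ (hT : T.IsTree) (hlf : ∀ u : V, (T.neighborSet u).Finite)
    (hdeg : ∀ u : V, 2 ≤ (T.neighborSet u).ncard) :
    ∀ (N : ℕ) (v p : V), T.Adj v p → ∀ A : Finset V,
    (∀ w ∈ A, T.dist w v < T.dist w p) →
    (∑ w ∈ A, (T.dist w v + 1)) ≤ N →
    ∃ P : Option ((w : {x // x ∈ A}) × Fin ((T.neighborSet (w : V)).ncard - 2)) → ℕ → V,
      (P none 0 = v) ∧
      (∀ (w : {x // x ∈ A}) k, P (some ⟨w, k⟩) 0 = (w : V)) ∧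
      (∀ i n, T.Adj (P i n) (P i (n + 1))) ∧
      (∀ i n, T.dist (P i n) v < T.dist (P i n) p) ∧
      (∀ i m n, m ≤ n → T.dist (P i m) (P i n) = n - m) ∧
      (∀ i j, i ≠ j → ∀ m n, s(P i m, P i (m + 1)) ≠ s(P j n, P j (n + 1))) := by
  classical
  have hc := hT.isConnected
  intro N
  induction N with
  | zero =>
    intro v p hvp A hA hsum
    have hAe : A = ∅ := by
      by_contra hne
      obtain ⟨w, hw⟩ := Finset.nonempty_iff_ne_empty.mpr hne
      have h1 : T.dist w v + 1 ≤ ∑ x ∈ A, (T.dist x v + 1) :=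
        Finset.single_le_sum (f := fun x => T.dist x v + 1) (fun i _ => Nat.zero_le _) hw
      omega
    subst hAe
    obtain ⟨u, hum, hup⟩ := Set.exists_ne_of_one_lt_ncard (s := T.neighborSet v)
      (by have := hdeg v; omega) p
    have hvu : T.Adj v u := hum
    obtain ⟨f, hf0, hf1, hfadj, hfgeo⟩ := exists_ray hT hdeg hvu
    have hside : ∀ n, T.dist (f n) v < T.dist (f n) p := by
      intro n
      cases n with
      | zero =>
        rw [hf0, SimpleGraph.dist_self, SimpleGraph.dist_eq_one_iff_adj.mpr hvp]
        omega
      | succ n =>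
        have ha := hfgeo 0 (n + 1) (Nat.zero_le _)
        have hb := hfgeo 1 (n + 1) (by omega)
        rw [hf0] at ha
        rw [hf1] at hb
        have ha' : T.dist (f (n + 1)) v = T.dist v (f (n + 1)) := SimpleGraph.dist_comm
        have hb' : T.dist (f (n + 1)) u = T.dist u (f (n + 1)) := SimpleGraph.dist_comm
        have h1 : T.dist (f (n + 1)) u < T.dist (f (n + 1)) v := by omega
        exact key1 hT hvp hvu hup h1
    refine ⟨fun _ => f, hf0, ?_, fun i n => hfadj n, fun i n => hside n,
      fun i m n h => hfgeo m n h, ?_⟩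
    · intro w k
      exact absurd w.2 (Finset.notMem_empty _)
    · intro i j hij
      exfalso
      rcases i with _ | s
      · rcases j with _ | s
        · exact hij rfl
        · exact absurd s.1.2 (Finset.notMem_empty _)
      · exact absurd s.1.2 (Finset.notMem_empty _)
  | succ N IH =>
    intro v p hvp A hA hsum
    have hpm : p ∈ (hlf v).toFinset := by
      rw [Set.Finite.mem_toFinset]; exact hvp
    set nb : Finset V := ((hlf v).toFinset).erase p with hnbdef
    have hnbAdj : ∀ u ∈ nb, T.Adj v u ∧ u ≠ p := by
      intro u hu
      rw [hnbdef, Finset.mem_erase, Set.Finite.mem_toFinset] at hu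
      exact ⟨hu.2, hu.1⟩
    have hnbcard : nb.card = (T.neighborSet v).ncard - 1 := by
      rw [hnbdef, Finset.card_erase_of_mem hpm, ← Set.ncard_eq_toFinset_card _ (hlf v)]
    set A' : Finset V := A.erase v with hA'def
    have hstep0 : ∀ w : V, ∃ u : V,
        w ∈ A' → (T.Adj v u ∧ T.dist w u + 1 = T.dist w v ∧ u ≠ p) := by
      intro w
      by_cases hw : w ∈ A'
      · have hwA : w ∈ A := Finset.mem_of_mem_erase hw
        have hwv : w ≠ v := Finset.ne_of_mem_erase hw
        have hd0 : T.dist w v ≠ 0 := by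
          rw [ne_eq, hc.dist_eq_zero_iff]; exact hwv
        obtain ⟨u, hu1, hu2⟩ := toward hc hd0
        refine ⟨u, fun _ => ⟨hu1, hu2, ?_⟩⟩
        intro hupp
        subst hupp
        have := hA w hwA
        omega
      · exact ⟨v, fun h => absurd h hw⟩
    choose stepf hstepf using hstep0
    set B : V → Finset V := fun u => A'.filter (fun w => stepf w = u) with hBdef
    have hBmem : ∀ u w, w ∈ B u → w ∈ A' ∧ stepf w = u := by
      intro u w hw
      rw [hBdef] at hw
      exact Finset.mem_filter.mp hw
    have hBsub : ∀ u, B u ⊆ A := by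
      intro u w hw
      exact Finset.mem_of_mem_erase (hBmem u w hw).1
    have hBd : ∀ u, ∀ w ∈ B u, T.dist w u + 1 = T.dist w v := by
      intro u w hw
      obtain ⟨hw1, hw2⟩ := hBmem u w hw
      have := (hstepf w hw1).2.1
      rwa [hw2] at this
    have hstepnb : ∀ x : V, x ∈ A' → stepf x ∈ nb := by
      intro x hx
      rw [hnbdef, Finset.mem_erase, Set.Finite.mem_toFinset]
      exact ⟨(hstepf x hx).2.2, (hstepf x hx).1⟩
    have hchild : ∀ u : V,
        ∃ Pu : Option ((w : {x // x ∈ B u}) × Fin ((T.neighborSet (w : V)).ncard - 2)) → ℕ → V,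
          u ∈ nb →
          ((Pu none 0 = u) ∧
           (∀ (w : {x // x ∈ B u}) k, Pu (some ⟨w, k⟩) 0 = (w : V)) ∧
           (∀ i n, T.Adj (Pu i n) (Pu i (n + 1))) ∧
           (∀ i n, T.dist (Pu i n) u < T.dist (Pu i n) v) ∧
           (∀ i m n, m ≤ n → T.dist (Pu i m) (Pu i n) = n - m) ∧
           (∀ i j, i ≠ j → ∀ m n, s(Pu i m, Pu i (m + 1)) ≠ s(Pu j n, Pu j (n + 1)))) := by
      intro u
      by_cases hu : u ∈ nb
      · obtain ⟨hadj, hune⟩ := hnbAdj u hu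
        have hsideB : ∀ w ∈ B u, T.dist w u < T.dist w v := by
          intro w hw
          have := hBd u w hw
          omega
        have hmeas : (∑ w ∈ B u, (T.dist w u + 1)) ≤ N := by
          by_cases hBe : B u = ∅
          · rw [hBe, Finset.sum_empty]; omega
          · have hcard : 1 ≤ (B u).card :=
              Finset.card_pos.mpr (Finset.nonempty_iff_ne_empty.mpr hBe)
            have he1 : ∑ w ∈ B u, (T.dist w v + 1)
                = (∑ w ∈ B u, (T.dist w u + 1)) + (B u).card := by
              have hcg : ∀ w ∈ B u, T.dist w v + 1 = (T.dist w u + 1) + 1 := by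
                intro w hw
                have := hBd u w hw
                omega
              have hsplit : ∑ w ∈ B u, (T.dist w u + 1 + 1)
                  = (∑ w ∈ B u, (T.dist w u + 1)) + ∑ w ∈ B u, 1 :=
                Finset.sum_add_distrib
              rw [Finset.sum_congr rfl hcg, hsplit, Finset.sum_const, smul_eq_mul, mul_one]
            have he2 : (∑ w ∈ B u, (T.dist w v + 1)) ≤ ∑ w ∈ A, (T.dist w v + 1) :=
              Finset.sum_le_sum_of_subset (hBsub u)
            omega
        obtain ⟨Pu, h1, h2, h3, h4, h5, h6⟩ := IH u v hadj.symm (B u) hsideB hmeas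
        exact ⟨Pu, fun _ => ⟨h1, h2, h3, h4, h5, h6⟩⟩
      · exact ⟨fun _ _ => v, fun h => absurd h hu⟩
    choose PU hPU using hchild
    have hnbne : nb.Nonempty := by
      rw [← Finset.card_pos, hnbcard]
      have := hdeg v
      omega
    obtain ⟨u0, hu0⟩ := hnbne
    have hDcard : (nb.erase u0).card = (T.neighborSet v).ncard - 2 := by
      rw [Finset.card_erase_of_mem hu0, hnbcard]
      omega
    set e0 : Fin ((T.neighborSet v).ncard - 2) → V :=
      fun k => ((Finset.equivFinOfCardEq hDcard).symm k : V) with he0def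
    have he0mem : ∀ k, e0 k ∈ nb.erase u0 :=
      fun k => ((Finset.equivFinOfCardEq hDcard).symm k).2
    have he0inj : Function.Injective e0 := by
      intro k k' h
      exact (Finset.equivFinOfCardEq hDcard).symm.injective (Subtype.coe_injective h)
    have hmemA' : ∀ (w : {x // x ∈ A}), ¬((w : V) = v) → (w : V) ∈ A' := by
      intro w hw
      rw [hA'def, Finset.mem_erase]
      exact ⟨hw, w.2⟩
    have hmemB : ∀ (w : {x // x ∈ A}) (hw : ¬((w : V) = v)),
        (w : V) ∈ B (stepf (w : V)) := by
      intro w hw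
      rw [hBdef, Finset.mem_filter]
      exact ⟨hmemA' w hw, rfl⟩
    have hgen0 : ∀ (u u' : V), u = u' → PU u none = PU u' none := by
      rintro u u' rfl
      rfl
    have hgenInner : ∀ (u u' : V) (h : u = u') (x : V) (hm : x ∈ B u) (hm' : x ∈ B u')
        (kk : Fin ((T.neighborSet x).ncard - 2)),
        PU u (some ⟨⟨x, hm⟩, kk⟩) = PU u' (some ⟨⟨x, hm'⟩, kk⟩) := by
      rintro u u' rfl x hm hm' kk
      rfl
    have meta1 : ∀ u, u ∈ nb →
        ((∀ n, T.Adj (pre v (PU u none) n) (pre v (PU u none) (n + 1))) ∧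
         (∀ m n, m ≤ n → T.dist (pre v (PU u none) m) (pre v (PU u none) n) = n - m) ∧
         (∀ n, T.dist (pre v (PU u none) n) v < T.dist (pre v (PU u none) n) p) ∧
         (∀ n, T.dist (pre v (PU u none) (n + 1)) u < T.dist (pre v (PU u none) (n + 1)) v)) := by
      intro u hu
      obtain ⟨hadj, hune⟩ := hnbAdj u hu
      obtain ⟨c1, c2, c3, c4, c5, c6⟩ := hPU u hu
      have hdz : ∀ n, T.dist v (PU u none n) = n + 1 := by
        intro n
        have hg : T.dist (PU u none 0) (PU u none n) = n - 0 := c5 none 0 n (Nat.zero_le _)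
        rw [c1] at hg
        have h1 : T.dist (PU u none n) u = T.dist u (PU u none n) := SimpleGraph.dist_comm
        have h2 := c4 none n
        have h3 : T.dist (PU u none n) v ≤ T.dist (PU u none n) u + 1 := by
          have ht := hc.dist_triangle (u := PU u none n) (v := u) (w := v)
          have h4 : T.dist u v = 1 := SimpleGraph.dist_eq_one_iff_adj.mpr hadj.symm
          omega
        have h5 : T.dist v (PU u none n) = T.dist (PU u none n) v := SimpleGraph.dist_comm
        omega
      refine ⟨?_, ?_, ?_, ?_⟩
      · intro n
        cases n with
        | zero =>
          show T.Adj v (PU u none 0)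
          rw [c1]
          exact hadj
        | succ n => exact c3 none n
      · intro m n hmn
        cases m with
        | zero =>
          cases n with
          | zero => simp [SimpleGraph.dist_self]
          | succ n =>
            show T.dist v (PU u none n) = n + 1 - 0
            rw [hdz n]
            omega
        | succ m =>
          cases n with
          | zero => omega
          | succ n =>
            show T.dist (PU u none m) (PU u none n) = n + 1 - (m + 1)
            rw [Nat.succ_sub_succ]
            exact c5 none m n (by omega)
      · intro n
        cases n with
        | zero =>
          show T.dist v v < T.dist v p
          rw [SimpleGraph.dist_self, SimpleGraph.dist_eq_one_iff_adj.mpr hvp]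
          omega
        | succ n => exact key1 hT hvp hadj hune (c4 none n)
      · intro n
        exact c4 none n
    have hX : ∀ u u', u ∈ nb → u' ∈ nb → u ≠ u' → ∀ f g : ℕ → V,
        (∀ n, T.dist (f (n + 1)) u < T.dist (f (n + 1)) v) →
        (∀ n, g n = v ∨ T.dist (g n) u' < T.dist (g n) v) →
        ∀ m n, s(f m, f (m + 1)) ≠ s(g n, g (n + 1)) := by
      intro u u' hu hu' hne f g hf hg m n heq
      have hx : f (m + 1) ∈ s(g n, g (n + 1)) := by
        rw [← heq]
        exact Sym2.mem_mk_right _ _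
      have hfm := hf m
      have hcases : f (m + 1) = v ∨ T.dist (f (m + 1)) u' < T.dist (f (m + 1)) v := by
        rcases Sym2.mem_iff.mp hx with h | h
        · rw [h]; exact hg n
        · rw [h]; exact hg (n + 1)
      rcases hcases with h | h
      · rw [h, SimpleGraph.dist_self] at hfm
        omega
      · have := key1 hT (hnbAdj u' hu').1 (hnbAdj u hu).1 hne hfm
        omega
    have hY : ∀ u (hu : u ∈ nb) j m n,
        s(pre v (PU u none) m, pre v (PU u none) (m + 1)) ≠
          s(PU u (some j) n, PU u (some j) (n + 1)) := by
      intro u hu j m n heq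
      obtain ⟨c1, c2, c3, c4, c5, c6⟩ := hPU u hu
      cases m with
      | zero =>
        have hv : v ∈ s(PU u (some j) n, PU u (some j) (n + 1)) := by
          rw [← heq]
          exact Sym2.mem_mk_left _ _
        have hnv : ∀ kk, PU u (some j) kk ≠ v := by
          intro kk hk
          have := c4 (some j) kk
          rw [hk, SimpleGraph.dist_self] at this
          omega
        rcases Sym2.mem_iff.mp hv with h | h
        · exact hnv n h.symm
        · exact hnv (n + 1) h.symm
      | succ m =>
        exact c6 none (some j) (fun h => by cases h) m n heq
    refine ⟨fun i => Option.elim i (pre v (PU u0 none)) (fun s =>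
      if hw : (s.1 : V) = v then
        pre v (PU (e0 (Fin.cast (by rw [hw]) s.2)) none)
      else
        PU (stepf (s.1 : V)) (some ⟨⟨(s.1 : V), hmemB s.1 hw⟩, s.2⟩)),
      rfl, ?_, ?_, ?_, ?_, ?_⟩
    · intro w k
      dsimp only [Option.elim]
      split_ifs with hw
      · exact hw.symm
      · exact (hPU (stepf (w : V)) (hstepnb _ (hmemA' w hw))).2.1 ⟨(w : V), hmemB w hw⟩ k
    · intro i n
      rcases i with _ | ⟨w, k⟩
      · exact (meta1 u0 hu0).1 n
      · dsimp only [Option.elim]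
        split_ifs with hw
        · exact (meta1 _ (Finset.mem_of_mem_erase (he0mem _))).1 n
        · exact (hPU (stepf (w : V)) (hstepnb _ (hmemA' w hw))).2.2.1 _ n
    · intro i n
      rcases i with _ | ⟨w, k⟩
      · exact (meta1 u0 hu0).2.2.1 n
      · dsimp only [Option.elim]
        split_ifs with hw
        · exact (meta1 _ (Finset.mem_of_mem_erase (he0mem _))).2.2.1 n
        · have hu1 : stepf (w : V) ∈ nb := hstepnb _ (hmemA' w hw)
          exact key1 hT hvp (hnbAdj _ hu1).1 (hnbAdj _ hu1).2
            ((hPU _ hu1).2.2.2.1 _ n)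
    · intro i m n hmn
      rcases i with _ | ⟨w, k⟩
      · exact (meta1 u0 hu0).2.1 m n hmn
      · dsimp only [Option.elim]
        split_ifs with hw
        · exact (meta1 _ (Finset.mem_of_mem_erase (he0mem _))).2.1 m n hmn
        · exact (hPU (stepf (w : V)) (hstepnb _ (hmemA' w hw))).2.2.2.2.1 _ m n hmn
    · intro i j hij m n
      rcases i with _ | ⟨w, k⟩ <;> rcases j with _ | ⟨w', k'⟩
      · exact absurd rfl hij
      · dsimp only [Option.elim]
        split_ifs with hw'
        · refine hX u0 (e0 (Fin.cast (by rw [hw']) k')) hu0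
            (Finset.mem_of_mem_erase (he0mem _)) ?_ _ _
            (meta1 u0 hu0).2.2.2 ?_ m n
          · intro h
            exact (Finset.mem_erase.mp (he0mem _)).1 h.symm
          · intro nn
            cases nn with
            | zero => exact Or.inl rfl
            | succ nn =>
              exact Or.inr ((meta1 _ (Finset.mem_of_mem_erase (he0mem _))).2.2.2 nn)
        · have hu1 : stepf (w' : V) ∈ nb := hstepnb _ (hmemA' w' hw')
          by_cases he : u0 = stepf (w' : V)
          · rw [hgen0 u0 (stepf (w' : V)) he]
            exact hY _ hu1 _ m n
          · exact hX u0 _ hu0 hu1 he _ _ (meta1 u0 hu0).2.2.2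
              (fun nn => Or.inr ((hPU _ hu1).2.2.2.1 _ nn)) m n
      · dsimp only [Option.elim]
        split_ifs with hw
        · intro heq
          refine hX u0 (e0 (Fin.cast (by rw [hw]) k)) hu0
            (Finset.mem_of_mem_erase (he0mem _)) ?_ _ _
            (meta1 u0 hu0).2.2.2 ?_ n m heq.symm
          · intro h
            exact (Finset.mem_erase.mp (he0mem _)).1 h.symm
          · intro nn
            cases nn with
            | zero => exact Or.inl rfl
            | succ nn =>
              exact Or.inr ((meta1 _ (Finset.mem_of_mem_erase (he0mem _))).2.2.2 nn)
        · have hu1 : stepf (w : V) ∈ nb := hstepnb _ (hmemA' w hw)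
          by_cases he : u0 = stepf (w : V)
          · rw [hgen0 u0 (stepf (w : V)) he]
            intro heq
            exact hY _ hu1 _ n m heq.symm
          · intro heq
            exact hX u0 _ hu0 hu1 he _ _ (meta1 u0 hu0).2.2.2
              (fun nn => Or.inr ((hPU _ hu1).2.2.2.1 _ nn)) n m heq.symm
      · dsimp only [Option.elim]
        by_cases hw : (w : V) = v
        · by_cases hw' : (w' : V) = v
          · rw [dif_pos hw, dif_pos hw']
            have hwweq : w = w' := Subtype.ext (hw.trans hw'.symm)
            subst hwweq
            have hkk : k ≠ k' := by
              intro h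
              exact hij (by rw [h])
            refine hX (e0 (Fin.cast (by rw [hw]) k)) (e0 (Fin.cast (by rw [hw]) k'))
              (Finset.mem_of_mem_erase (he0mem _))
              (Finset.mem_of_mem_erase (he0mem _)) ?_ _ _
              (meta1 _ (Finset.mem_of_mem_erase (he0mem _))).2.2.2 ?_ m n
            · intro h
              apply hkk
              have h2 := he0inj h
              have h3 := congrArg Fin.val h2
              simp only [Fin.coe_cast] at h3
              exact Fin.ext h3
            · intro nn
              cases nn with
              | zero => exact Or.inl rfl
              | succ nn =>
                exact Or.inr ((meta1 _ (Finset.mem_of_mem_erase (he0mem _))).2.2.2 nn)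
          · rw [dif_pos hw, dif_neg hw']
            have hu1 : stepf (w' : V) ∈ nb := hstepnb _ (hmemA' w' hw')
            by_cases he : e0 (Fin.cast (by rw [hw]) k) = stepf (w' : V)
            · rw [hgen0 _ _ he]
              exact hY _ hu1 _ m n
            · exact hX (e0 (Fin.cast (by rw [hw]) k)) _
                (Finset.mem_of_mem_erase (he0mem _)) hu1 he _ _
                (meta1 _ (Finset.mem_of_mem_erase (he0mem _))).2.2.2
                (fun nn => Or.inr ((hPU _ hu1).2.2.2.1 _ nn)) m n
        · by_cases hw' : (w' : V) = v
          · rw [dif_neg hw, dif_pos hw']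
            have hu1 : stepf (w : V) ∈ nb := hstepnb _ (hmemA' w hw)
            by_cases he : e0 (Fin.cast (by rw [hw']) k') = stepf (w : V)
            · rw [hgen0 _ _ he]
              intro heq
              exact hY _ hu1 _ n m heq.symm
            · intro heq
              exact hX (e0 (Fin.cast (by rw [hw']) k')) _
                (Finset.mem_of_mem_erase (he0mem _)) hu1 he _ _
                (meta1 _ (Finset.mem_of_mem_erase (he0mem _))).2.2.2
                (fun nn => Or.inr ((hPU _ hu1).2.2.2.1 _ nn)) n m heq.symm
          · rw [dif_neg hw, dif_neg hw']
            have hu1 : stepf (w : V) ∈ nb := hstepnb _ (hmemA' w hw)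
            have hu2 : stepf (w' : V) ∈ nb := hstepnb _ (hmemA' w' hw')
            by_cases he : stepf (w : V) = stepf (w' : V)
            · have hm2 : (w' : V) ∈ B (stepf (w : V)) := by
                rw [hBdef, Finset.mem_filter]
                exact ⟨hmemA' w' hw', he.symm⟩
              rw [hgenInner (stepf (w' : V)) (stepf (w : V)) he.symm (w' : V)
                (hmemB w' hw') hm2 k']
              have hsig : (⟨w, k⟩ :
                  (x : {x // x ∈ A}) × Fin ((T.neighborSet (x : V)).ncard - 2)) ≠ ⟨w', k'⟩ := by
                intro h
                exact hij (by rw [h])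
              have hlift := lift_ne (Pp := fun x => x ∈ A)
                (Qq := fun x => x ∈ B (stepf (w : V)))
                (nn := fun x => (T.neighborSet x).ncard - 2)
                (hmemB w hw) hm2 hsig
              exact (hPU _ hu1).2.2.2.2.2 _ _
                (fun hh => hlift (Option.some_injective _ hh)) m n
            · exact hX _ _ hu1 hu2 he _ _
                (fun nn => (hPU _ hu1).2.2.2.1 _ (nn + 1))
                (fun nn => Or.inr ((hPU _ hu2).2.2.2.1 _ nn)) m n


end TreeAux

set_option maxHeartbeats 1600000

/-- **Lemma 2.6.**  Let `T` be a locally finite tree in which every vertex has degree at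
least two and let `A` be a finite set of vertices.  Then there are
`∑_{v ∈ A} (deg(v) - 2)` pairwise edge-disjoint infinite simple paths in `T`, each starting
at a vertex of `A`. -/
theorem tree_edge_disjoint_rays
    {V : Type*} (T : SimpleGraph V) (hT : T.IsTree)
    (hlf : ∀ u : V, (T.neighborSet u).Finite)
    (hdeg : ∀ u : V, 2 ≤ (T.neighborSet u).ncard) (A : Finset V) :
    ∃ P : Fin (∑ u ∈ A, ((T.neighborSet u).ncard - 2)) → ℕ → V,
      (∀ i, P i 0 ∈ A) ∧
      (∀ i, Function.Injective (P i)) ∧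
      (∀ i n, T.Adj (P i n) (P i (n + 1))) ∧
      (∀ i j, i ≠ j → ∀ m n : ℕ, s(P i m, P i (m + 1)) ≠ s(P j n, P j (n + 1))) := by
  classical
  rcases Finset.eq_empty_or_nonempty A with hA | ⟨a, ha⟩
  · subst hA
    have h0 : (∑ u ∈ (∅ : Finset V), ((T.neighborSet u).ncard - 2)) = 0 := Finset.sum_empty
    refine ⟨fun i => Fin.elim0 (Fin.cast h0 i), ?_, ?_, ?_, ?_⟩ <;>
      intro i <;> exact Fin.elim0 (Fin.cast h0 i)
  · have hna : (T.neighborSet a).Nonempty :=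
      Set.nonempty_of_ncard_ne_zero (by have := hdeg a; omega)
    obtain ⟨b, hb⟩ := hna
    have hab : T.Adj a b := hb
    have hALs : ∀ w ∈ A.filter (fun w => T.dist w a < T.dist w b),
        T.dist w a < T.dist w b := fun w hw => (Finset.mem_filter.mp hw).2
    have hARs : ∀ w ∈ A.filter (fun w => ¬(T.dist w a < T.dist w b)),
        T.dist w b < T.dist w a := by
      intro w hw
      have h2 := (Finset.mem_filter.mp hw).2
      rcases adjSplit hT hab w with h | h <;> omega
    obtain ⟨PL, l1, l2, l3, l4, l5, l6⟩ := buildQ hT hlf hdeg _ a b hab _ hALs le_rfl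
    obtain ⟨PR, r1, r2, r3, r4, r5, r6⟩ := buildQ hT hlf hdeg _ b a hab.symm _ hARs le_rfl
    have hcard : Fintype.card ((w : {x // x ∈ A}) × Fin ((T.neighborSet (w : V)).ncard - 2))
        = ∑ u ∈ A, ((T.neighborSet u).ncard - 2) := by
      rw [Fintype.card_sigma]
      simp only [Fintype.card_fin]
      exact Finset.sum_coe_sort A (fun u => (T.neighborSet u).ncard - 2)
    have hmemL : ∀ (s : (w : {x // x ∈ A}) × Fin ((T.neighborSet (w : V)).ncard - 2)),
        T.dist (s.1 : V) a < T.dist (s.1 : V) b →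
        (s.1 : V) ∈ A.filter (fun w => T.dist w a < T.dist w b) :=
      fun s h => Finset.mem_filter.mpr ⟨s.1.2, h⟩
    have hmemR : ∀ (s : (w : {x // x ∈ A}) × Fin ((T.neighborSet (w : V)).ncard - 2)),
        ¬(T.dist (s.1 : V) a < T.dist (s.1 : V) b) →
        (s.1 : V) ∈ A.filter (fun w => ¬(T.dist w a < T.dist w b)) :=
      fun s h => Finset.mem_filter.mpr ⟨s.1.2, h⟩
    refine ⟨fun i => (fun s => if h : T.dist (s.1 : V) a < T.dist (s.1 : V) b
        then PL (some ⟨⟨(s.1 : V), hmemL s h⟩, s.2⟩)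
        else PR (some ⟨⟨(s.1 : V), hmemR s h⟩, s.2⟩))
        ((Fintype.equivFinOfCardEq hcard).symm i), ?_, ?_, ?_, ?_⟩
    · intro i
      dsimp only
      split_ifs with h
      · rw [l2 ⟨_, hmemL _ h⟩ _]
        exact ((Fintype.equivFinOfCardEq hcard).symm i).1.2
      · rw [r2 ⟨_, hmemR _ h⟩ _]
        exact ((Fintype.equivFinOfCardEq hcard).symm i).1.2
    · intro i
      dsimp only
      split_ifs with h
      · exact geo_inj (fun m n hmn => l5 _ m n hmn)
      · exact geo_inj (fun m n hmn => r5 _ m n hmn)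
    · intro i n
      dsimp only
      split_ifs with h
      · exact l3 _ n
      · exact r3 _ n
    · intro i j hij m n
      have hsne : (Fintype.equivFinOfCardEq hcard).symm i
          ≠ (Fintype.equivFinOfCardEq hcard).symm j :=
        fun h => hij ((Fintype.equivFinOfCardEq hcard).symm.injective h)
      dsimp only
      split_ifs with hi hj hj
      · -- both left
        have hlift := lift_ne (Pp := fun x => x ∈ A)
          (Qq := fun x => x ∈ A.filter (fun w => T.dist w a < T.dist w b))
          (nn := fun x => (T.neighborSet x).ncard - 2)
          (hmemL _ hi) (hmemL _ hj) hsne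
        exact l6 _ _ (fun hh => hlift (Option.some_injective _ hh)) m n
      · -- left vs right
        intro heq
        have hx : PL (some ⟨⟨_, hmemL _ hi⟩, ((Fintype.equivFinOfCardEq hcard).symm i).2⟩) m
            ∈ s(PR (some ⟨⟨_, hmemR _ hj⟩, ((Fintype.equivFinOfCardEq hcard).symm j).2⟩) n,
               PR (some ⟨⟨_, hmemR _ hj⟩, ((Fintype.equivFinOfCardEq hcard).symm j).2⟩) (n + 1)) := by
          rw [← heq]
          exact Sym2.mem_mk_left _ _
        have hl := l4 (some ⟨⟨_, hmemL _ hi⟩, ((Fintype.equivFinOfCardEq hcard).symm i).2⟩) m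
        rcases Sym2.mem_iff.mp hx with h | h
        · have hr := r4 (some ⟨⟨_, hmemR _ hj⟩, ((Fintype.equivFinOfCardEq hcard).symm j).2⟩) n
          rw [← h] at hr
          omega
        · have hr := r4 (some ⟨⟨_, hmemR _ hj⟩, ((Fintype.equivFinOfCardEq hcard).symm j).2⟩) (n + 1)
          rw [← h] at hr
          omega
      · -- right vs left
        intro heq
        have hx : PR (some ⟨⟨_, hmemR _ hi⟩, ((Fintype.equivFinOfCardEq hcard).symm i).2⟩) m
            ∈ s(PL (some ⟨⟨_, hmemL _ hj⟩, ((Fintype.equivFinOfCardEq hcard).symm j).2⟩) n,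
               PL (some ⟨⟨_, hmemL _ hj⟩, ((Fintype.equivFinOfCardEq hcard).symm j).2⟩) (n + 1)) := by
          rw [← heq]
          exact Sym2.mem_mk_left _ _
        have hl := r4 (some ⟨⟨_, hmemR _ hi⟩, ((Fintype.equivFinOfCardEq hcard).symm i).2⟩) m
        rcases Sym2.mem_iff.mp hx with h | h
        · have hr := l4 (some ⟨⟨_, hmemL _ hj⟩, ((Fintype.equivFinOfCardEq hcard).symm j).2⟩) n
          rw [← h] at hr
          omega
        · have hr := l4 (some ⟨⟨_, hmemL _ hj⟩, ((Fintype.equivFinOfCardEq hcard).symm j).2⟩) (n + 1)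
          rw [← h] at hr
          omega
      · -- both right
        have hlift := lift_ne (Pp := fun x => x ∈ A)
          (Qq := fun x => x ∈ A.filter (fun w => ¬(T.dist w a < T.dist w b)))
          (nn := fun x => (T.neighborSet x).ncard - 2)
          (hmemR _ hi) (hmemR _ hj) hsne
        exact r6 _ _ (fun hh => hlift (Option.some_injective _ hh)) m n


end Percolation
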